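/- Let m ≤ n be natural numbers, and for k = 1,…,m let ν_k, μ_k be real numbers with ν_k² + μ_k² = 1. Let Γ_can be the 2(m+n)×2(m+n) real block-diagonal matrix Γ_can = ⨁_{k=1}^{m} Γ_k ⊕ ⨁_{ℓ=1}^{n−m} J, where Γ_k is the 4×4 matrix with rows (0, ν_k, μ_k, 0), (−ν_k, 0, 0, μ_k), (−μ_k, 0, 0, −ν_k), (0, −μ_k, ν_k, 0), and J is the 2×2 matrix with rows (0,1), (−1,0). Then for every natural number α ≥ 1, the sum over all principal minors satisfies ∑_{S} |det(Γ_can|_S)|^{α} = 2^{n−m} ∏_{k=1}^{m} 2(1 + ν_k^{2α} + μ_k^{2α}), the sum running over all subsets S of the full index set. -/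

import Mathlib

open Matrix BigOperators

/-- The principal minor of `A` indexed by the subset `S` of an arbitrary finite index type. -/
def principalMinor {ι : Type*} [Fintype ι] [DecidableEq ι]
    (A : Matrix ι ι ℝ) (S : Finset ι) : ℝ :=
  (A.submatrix (fun i : S => (i : ι)) (fun j : S => (j : ι))).det

/-- The canonical 4×4 covariance block of one entangled fermionic mode pair. -/
def gammaBlock (ν μ : ℝ) : Matrix (Fin 4) (Fin 4) ℝ :=
  !![0, ν, μ, 0; -ν, 0, 0, μ; -μ, 0, 0, -ν; 0, -μ, ν, 0]

/-- The 2×2 local pure block J. -/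
def Jblock : Matrix (Fin 2) (Fin 2) ℝ := !![0, 1; -1, 0]

section Aux

variable {ι κ : Type*} [Fintype ι] [DecidableEq ι] [Fintype κ] [DecidableEq κ]

lemma pm_empty (A : Matrix ι ι ℝ) : principalMinor A ∅ = 1 :=
  Matrix.det_isEmpty

lemma pm_univ (A : Matrix ι ι ℝ) : principalMinor A Finset.univ = A.det := by
  unfold principalMinor
  rw [← Matrix.det_submatrix_equiv_self (Equiv.subtypeUnivEquiv fun x => Finset.mem_univ x) A]
  congr!

lemma pm_antisymm (A : Matrix ι ι ℝ) (hA : Aᵀ = -A) (S : Finset ι)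
    (h : Odd S.card) : principalMinor A S = 0 := by
  set B := A.submatrix (fun i : S => (i : ι)) (fun j : S => (j : ι)) with hB
  have hBt : Bᵀ = -B := by
    ext i j
    have := congrFun (congrFun hA (i : ι)) (j : ι)
    simpa [hB, Matrix.transpose_apply] using this
  have h1 : B.det = (-1 : ℝ) ^ Fintype.card {x // x ∈ S} * B.det := by
    conv_lhs => rw [← Matrix.det_transpose, hBt, Matrix.det_neg]
  rw [Fintype.card_coe, h.neg_one_pow] at h1
  have h2 : principalMinor A S = B.det := rfl
  rw [h2]; linarith

lemma pm_pair (A : Matrix ι ι ℝ) {a b : ι} (hab : a ≠ b) :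
    principalMinor A {a, b} = A a a * A b b - A a b * A b a := by
  have ha : a ∈ ({a, b} : Finset ι) := by simp
  have hb : b ∈ ({a, b} : Finset ι) := by simp
  let e : Fin 2 ≃ {x // x ∈ ({a, b} : Finset ι)} :=
    { toFun := ![⟨a, ha⟩, ⟨b, hb⟩]
      invFun := fun x => if (x : ι) = a then 0 else 1
      left_inv := by
        intro i
        fin_cases i <;> simp [hab.symm]
      right_inv := by
        rintro ⟨x, hx⟩
        simp only [Finset.mem_insert, Finset.mem_singleton] at hx
        rcases hx with rfl | rfl
        · simp
        · simp [hab.symm] }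
  unfold principalMinor
  rw [← Matrix.det_submatrix_equiv_self e, Matrix.submatrix_submatrix,
    Matrix.det_fin_two]
  simp [e, Function.comp]

lemma pm_reindex {ι' : Type*} [Fintype ι'] [DecidableEq ι'] (e : ι' ≃ ι)
    (A : Matrix ι ι ℝ) (S : Finset ι') :
    principalMinor (A.submatrix e e) S = principalMinor A (S.map e.toEmbedding) := by
  unfold principalMinor
  let f : {x // x ∈ S} ≃ {y // y ∈ S.map e.toEmbedding} :=
    e.subtypeEquiv (fun x => by simp)
  rw [← Matrix.det_submatrix_equiv_self f (A.submatrix _ _), Matrix.submatrix_submatrix,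
    Matrix.submatrix_submatrix]
  congr! <;> (funext x; rfl)

lemma sum_pm_reindex {ι' : Type*} [Fintype ι'] [DecidableEq ι'] (e : ι' ≃ ι)
    (A : Matrix ι ι ℝ) (g : ℝ → ℝ) :
    ∑ S : Finset ι', g (principalMinor (A.submatrix e e) S)
      = ∑ S : Finset ι, g (principalMinor A S) := by
  rw [← Equiv.sum_comp (Equiv.finsetCongr e) (fun S => g (principalMinor A S))]
  exact Finset.sum_congr rfl fun S _ => by rw [pm_reindex]; rfl

lemma pm_fromBlocks (A : Matrix ι ι ℝ) (B : Matrix κ κ ℝ) (S : Finset (ι ⊕ κ)) :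
    principalMinor (Matrix.fromBlocks A 0 0 B) S =
      principalMinor A (S.preimage Sum.inl Sum.inl_injective.injOn) *
      principalMinor B (S.preimage Sum.inr Sum.inr_injective.injOn) := by
  set S₁ := S.preimage Sum.inl Sum.inl_injective.injOn with hS₁
  set S₂ := S.preimage Sum.inr Sum.inr_injective.injOn with hS₂
  let e : {x // x ∈ S₁} ⊕ {x // x ∈ S₂} ≃ {x // x ∈ S} :=
    { toFun := fun x => match x with
        | .inl ⟨a, h⟩ => ⟨.inl a, by simpa [hS₁] using h⟩
        | .inr ⟨b, h⟩ => ⟨.inr b, by simpa [hS₂] using h⟩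
      invFun := fun x => match x with
        | ⟨.inl a, h⟩ => .inl ⟨a, by simpa [hS₁] using h⟩
        | ⟨.inr b, h⟩ => .inr ⟨b, by simpa [hS₂] using h⟩
      left_inv := by rintro (⟨a, h⟩ | ⟨b, h⟩) <;> rfl
      right_inv := by rintro ⟨a | b, h⟩ <;> rfl }
  unfold principalMinor
  rw [← Matrix.det_submatrix_equiv_self e ((Matrix.fromBlocks A 0 0 B).submatrix _ _),
    Matrix.submatrix_submatrix]
  have : (Matrix.fromBlocks A 0 0 B).submatrix ((fun i : S => (i : ι ⊕ κ)) ∘ e)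
        ((fun j : S => (j : ι ⊕ κ)) ∘ e)
      = Matrix.fromBlocks (A.submatrix (fun i : S₁ => (i : ι)) (fun j : S₁ => (j : ι))) 0 0
          (B.submatrix (fun i : S₂ => (i : κ)) (fun j : S₂ => (j : κ))) := by
    ext x y
    rcases x with ⟨a, h⟩ | ⟨a, h⟩ <;> rcases y with ⟨b, h'⟩ | ⟨b, h'⟩ <;> rfl
  rw [this, Matrix.det_fromBlocks_zero₁₂]

noncomputable def finsetSumEquiv : Finset (ι ⊕ κ) ≃ Finset ι × Finset κ where
  toFun S := (S.preimage Sum.inl Sum.inl_injective.injOn,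
              S.preimage Sum.inr Sum.inr_injective.injOn)
  invFun p := p.1.map ⟨Sum.inl, Sum.inl_injective⟩ ∪ p.2.map ⟨Sum.inr, Sum.inr_injective⟩
  left_inv S := by
    ext x
    rcases x with a | b <;> simp
  right_inv p := by
    refine Prod.ext ?_ ?_ <;> ext x <;> simp

lemma sum_fromBlocks (A : Matrix ι ι ℝ) (B : Matrix κ κ ℝ) (α : ℕ) :
    ∑ S : Finset (ι ⊕ κ), |principalMinor (Matrix.fromBlocks A 0 0 B) S| ^ α
      = (∑ T : Finset ι, |principalMinor A T| ^ α) *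
        (∑ U : Finset κ, |principalMinor B U| ^ α) := by
  calc ∑ S : Finset (ι ⊕ κ), |principalMinor (Matrix.fromBlocks A 0 0 B) S| ^ α
      = ∑ p : Finset ι × Finset κ, |principalMinor A p.1| ^ α * |principalMinor B p.2| ^ α := by
        refine Fintype.sum_equiv finsetSumEquiv _ _ fun S => ?_
        rw [pm_fromBlocks, abs_mul, mul_pow]
        rfl
    _ = _ := by rw [Fintype.sum_prod_type]; simp only []; rw [← Finset.sum_mul_sum]

def finAppendEquiv (β : Type*) (N : ℕ) : (β × Fin N) ⊕ β ≃ β × Fin (N + 1) where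
  toFun x := match x with
    | .inl (b, k) => (b, k.castSucc)
    | .inr b => (b, Fin.last N)
  invFun p := if h : p.2 = Fin.last N then .inr p.1 else .inl (p.1, p.2.castPred h)
  left_inv := by
    rintro (⟨b, k⟩ | b)
    · simp [(Fin.castSucc_lt_last k).ne]
    · simp
  right_inv := by
    rintro ⟨b, k⟩
    by_cases h : k = Fin.last N
    · simp [h]
    · simp [h]

lemma blockDiagonal_succ_submatrix {β : Type*} [Fintype β] [DecidableEq β]
    (N : ℕ) (M : Fin (N + 1) → Matrix β β ℝ) :
    (Matrix.blockDiagonal M).submatrix (finAppendEquiv β N) (finAppendEquiv β N)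
      = Matrix.fromBlocks
          (Matrix.blockDiagonal fun k : Fin N => M k.castSucc) 0 0 (M (Fin.last N)) := by
  ext x y
  rcases x with ⟨b, k⟩ | b <;> rcases y with ⟨c, l⟩ | c <;>
    simp [finAppendEquiv, Matrix.blockDiagonal_apply, Matrix.fromBlocks,
      Fin.castSucc_inj, (Fin.castSucc_lt_last _).ne]
  intro h
  exact absurd h.symm (Fin.castSucc_lt_last _).ne

lemma sum_pm_blockDiagonal {β : Type*} [Fintype β] [DecidableEq β] (α : ℕ) :
    ∀ (N : ℕ) (M : Fin N → Matrix β β ℝ),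
    ∑ S : Finset (β × Fin N), |principalMinor (Matrix.blockDiagonal M) S| ^ α
      = ∏ k : Fin N, ∑ T : Finset β, |principalMinor (M k) T| ^ α := by
  intro N
  induction N with
  | zero =>
    intro M
    rw [Finset.prod_of_isEmpty]
    rw [show (Finset.univ : Finset (Finset (β × Fin 0))) = {∅} from Finset.univ_unique]
    rw [Finset.sum_singleton, pm_empty]
    simp
  | succ N ih =>
    intro M
    rw [← sum_pm_reindex (finAppendEquiv β N) (Matrix.blockDiagonal M) (fun x => |x| ^ α),
      blockDiagonal_succ_submatrix, sum_fromBlocks, ih, Fin.prod_univ_castSucc]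

lemma J_sum (α : ℕ) (hα : 1 ≤ α) :
    ∑ S : Finset (Fin 2), |principalMinor Jblock S| ^ α = 2 := by
  have hJt : Jblockᵀ = -Jblock := by
    ext i j; fin_cases i <;> fin_cases j <;> simp [Jblock]
  have h0 : ∀ S : Finset (Fin 2), Odd S.card → |principalMinor Jblock S| ^ α = 0 :=
    fun S h => by rw [pm_antisymm _ hJt _ h, abs_zero, zero_pow (by omega)]
  rw [show (Finset.univ : Finset (Finset (Fin 2))) = {∅, {0}, {1}, {0, 1}} from by decide]
  rw [Finset.sum_insert (by decide), Finset.sum_insert (by decide),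
    Finset.sum_insert (by decide), Finset.sum_singleton]
  rw [pm_empty, h0 {0} (by decide), h0 {1} (by decide),
    show ({0, 1} : Finset (Fin 2)) = Finset.univ from by decide, pm_univ,
    show Jblock.det = 1 from by simp [Jblock, Matrix.det_fin_two]]
  norm_num

lemma gamma_det (ν μ : ℝ) : (gammaBlock ν μ).det = (ν ^ 2 + μ ^ 2) ^ 2 := by
  simp [gammaBlock, Matrix.det_succ_row_zero, Fin.sum_univ_succ, Fin.succAbove]
  ring

lemma gamma_sum (ν μ : ℝ) (h : ν ^ 2 + μ ^ 2 = 1) (α : ℕ) (hα : 1 ≤ α) :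
    ∑ S : Finset (Fin 4), |principalMinor (gammaBlock ν μ) S| ^ α
      = 2 * (1 + ν ^ (2 * α) + μ ^ (2 * α)) := by
  have hAt : (gammaBlock ν μ)ᵀ = -(gammaBlock ν μ) := by
    ext i j; fin_cases i <;> fin_cases j <;> simp [gammaBlock]
  have h0 : ∀ S : Finset (Fin 4), Odd S.card → |principalMinor (gammaBlock ν μ) S| ^ α = 0 :=
    fun S hS => by rw [pm_antisymm _ hAt _ hS, abs_zero, zero_pow (by omega)]
  have hsq : ∀ x : ℝ, |x ^ 2| ^ α = x ^ (2 * α) := fun x => by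
    rw [abs_of_nonneg (sq_nonneg x), ← pow_mul]
  have hdet : (gammaBlock ν μ).det = 1 := by rw [gamma_det, h]; norm_num
  have hz : |(0 : ℝ)| ^ α = 0 := by rw [abs_zero, zero_pow (by omega)]
  rw [show (Finset.univ : Finset (Finset (Fin 4))) =
      {∅, {0}, {1}, {2}, {3}, {0,1}, {0,2}, {0,3}, {1,2}, {1,3}, {2,3},
       {0,1,2}, {0,1,3}, {0,2,3}, {1,2,3}, {0,1,2,3}} from by decide]
  rw [Finset.sum_insert (by decide), Finset.sum_insert (by decide),
    Finset.sum_insert (by decide), Finset.sum_insert (by decide),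
    Finset.sum_insert (by decide), Finset.sum_insert (by decide),
    Finset.sum_insert (by decide), Finset.sum_insert (by decide),
    Finset.sum_insert (by decide), Finset.sum_insert (by decide),
    Finset.sum_insert (by decide), Finset.sum_insert (by decide),
    Finset.sum_insert (by decide), Finset.sum_insert (by decide),
    Finset.sum_insert (by decide), Finset.sum_singleton]
  rw [pm_empty, h0 {0} (by decide), h0 {1} (by decide), h0 {2} (by decide), h0 {3} (by decide),
    h0 {0,1,2} (by decide), h0 {0,1,3} (by decide), h0 {0,2,3} (by decide), h0 {1,2,3} (by decide)]
  rw [show principalMinor (gammaBlock ν μ) {0, 1} = ν ^ 2 from by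
      rw [pm_pair _ (by decide)]; simp [gammaBlock]; ring,
    show principalMinor (gammaBlock ν μ) {0, 2} = μ ^ 2 from by
      rw [pm_pair _ (by decide)]; simp [gammaBlock]; ring,
    show principalMinor (gammaBlock ν μ) {0, 3} = 0 from by
      rw [pm_pair _ (by decide)]; simp [gammaBlock],
    show principalMinor (gammaBlock ν μ) {1, 2} = 0 from by
      rw [pm_pair _ (by decide)]; simp [gammaBlock],
    show principalMinor (gammaBlock ν μ) {1, 3} = μ ^ 2 from by
      rw [pm_pair _ (by decide)]; simp [gammaBlock]; ring,
    show principalMinor (gammaBlock ν μ) {2, 3} = ν ^ 2 from by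
      rw [pm_pair _ (by decide)]; simp [gammaBlock]; ring,
    show ({0,1,2,3} : Finset (Fin 4)) = Finset.univ from by decide, pm_univ, hdet]
  rw [hsq ν, hsq μ, hz]
  norm_num
  ring

end Aux

/-- For the canonical covariance matrix Γ_can = ⨁_k Γ_k ⊕ ⨁_ℓ J, the sum over all
principal minors of the α-th powers of their absolute values equals
2^{n−m} ∏_k 2(1 + ν_k^{2α} + μ_k^{2α}). -/
theorem sum_abs_principalMinor_pow_canonicalForm (m n : ℕ) (hmn : m ≤ n)
    (ν μ : Fin m → ℝ) (hνμ : ∀ k, ν k ^ 2 + μ k ^ 2 = 1)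
    (α : ℕ) (hα : 1 ≤ α) :
    ∑ S : Finset ((Fin 4 × Fin m) ⊕ (Fin 2 × Fin (n - m))),
        |principalMinor
            (Matrix.fromBlocks
              (Matrix.blockDiagonal fun k : Fin m => gammaBlock (ν k) (μ k)) 0 0
              (Matrix.blockDiagonal fun _ : Fin (n - m) => Jblock)) S| ^ α
      = 2 ^ (n - m) * ∏ k : Fin m, 2 * (1 + ν k ^ (2 * α) + μ k ^ (2 * α)) := by
  rw [sum_fromBlocks, sum_pm_blockDiagonal, sum_pm_blockDiagonal]
  rw [Finset.prod_congr rfl fun k _ => gamma_sum (ν k) (μ k) (hνμ k) α hα]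
  rw [Finset.prod_congr rfl fun _ _ => J_sum α hα]
  rw [Finset.prod_const, Finset.card_univ, Fintype.card_fin, mul_comm]
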